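/- arXiv:1411.3244 — 2 statements merged into one kernel-verified Lean document; each statement's English description precedes it below -/
import Mathlib

section
/- For every natural number n ≥ 2, ψ^{(n-1)}(1/4) + ψ^{(n-1)}(3/4) = (-1)^n · 2^n · (2^n - 1) · (n-1)! · ζ(n); formally, iteratedDeriv n (fun x : ℝ => Real.log (Real.Gamma x)) (1/4) + iteratedDeriv n (fun x : ℝ => Real.log (Real.Gamma x)) (3/4) = (-1)^n * (2^n : ℝ) * ((2^n : ℝ) - 1) * (n-1)! * ∑' k : ℕ, (1 : ℝ) / (k+1)^n. -/
open Real Filter Topology Set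

noncomputable def PG (k : ℕ) (x : ℝ) : ℝ := ∑' m : ℕ, 1 / (x + m) ^ k

noncomputable def psiR (x : ℝ) : ℝ :=
  -Real.eulerMascheroniConstant + ∑' m : ℕ, (1 / (1 + (m : ℝ)) - 1 / (x + m))

lemma min_pos {a : ℝ} (ha : 0 < a) : 0 < min a 1 := lt_min ha one_pos

lemma min_mul_le {a y : ℝ} (ha : 0 < a) (hay : a ≤ y) (m : ℕ) :
    min a 1 * ((m : ℝ) + 1) ≤ y + m := by
  have h1 : min a 1 ≤ a := min_le_left _ _
  have h2 : min a 1 ≤ 1 := min_le_right _ _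
  have hm : (0:ℝ) ≤ m := Nat.cast_nonneg m
  nlinarith

lemma summable_basic {n : ℕ} (hn : 2 ≤ n) :
    Summable (fun m : ℕ => 1 / ((m : ℝ) + 1) ^ n) := by
  have h := Real.summable_one_div_nat_pow.mpr hn
  have h2 := (summable_nat_add_iff (f := fun m : ℕ => 1 / (m : ℝ) ^ n) 1).mpr h
  refine h2.congr fun m => ?_
  push_cast
  ring_nf

lemma pow_bound {a y : ℝ} (ha : 0 < a) (hay : a ≤ y) (m n : ℕ) :
    1 / (y + (m : ℝ)) ^ n ≤ (1 / min a 1) ^ n * (1 / ((m : ℝ) + 1) ^ n) := by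
  have hpos : 0 < min a 1 * ((m : ℝ) + 1) := by positivity
  have hle := min_mul_le ha hay m
  calc 1 / (y + (m:ℝ)) ^ n ≤ 1 / (min a 1 * ((m:ℝ) + 1)) ^ n :=
        one_div_le_one_div_of_le (pow_pos hpos n) (pow_le_pow_left₀ hpos.le hle n)
    _ = (1 / min a 1) ^ n * (1 / ((m : ℝ) + 1) ^ n) := by rw [mul_pow]; ring

lemma summable_pow {x : ℝ} (hx : 0 < x) {n : ℕ} (hn : 2 ≤ n) :
    Summable (fun m : ℕ => 1 / (x + (m : ℝ)) ^ n) := by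
  refine Summable.of_nonneg_of_le (fun m => by positivity)
    (fun m => pow_bound hx le_rfl m n) (((summable_basic hn)).mul_left _)

lemma summable_psi {x : ℝ} (hx : 0 < x) :
    Summable (fun m : ℕ => 1 / (1 + (m : ℝ)) - 1 / (x + m)) := by
  apply Summable.of_norm_bounded (g := fun m : ℕ => (|x - 1| * (1 / min x 1)) * (1 / ((m : ℝ) + 1) ^ 2))
    (((summable_basic le_rfl)).mul_left _)
  intro m
  have h1 : (0:ℝ) < 1 + m := by positivity
  have h2 : (0:ℝ) < x + m := by positivity
  have he : 1 / (1 + (m : ℝ)) - 1 / (x + m) = (x - 1) * (1 / ((1 + (m:ℝ)) * (x + m))) := by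
    field_simp
    ring
  rw [he, norm_mul, Real.norm_eq_abs, Real.norm_eq_abs, abs_of_nonneg (by positivity : (0:ℝ) ≤ 1 / ((1 + (m:ℝ)) * (x + m)))]
  rw [mul_assoc]
  apply mul_le_mul_of_nonneg_left ?_ (abs_nonneg _)
  have hle : min x 1 * ((m:ℝ) + 1) ≤ x + m := min_mul_le hx le_rfl m
  have hmin := min_pos hx
  have key : min x 1 * ((m:ℝ)+1)^2 ≤ (1 + (m:ℝ)) * (x + m) := by
    have : min x 1 * ((m:ℝ)+1)^2 = ((m:ℝ)+1) * (min x 1 * ((m:ℝ)+1)) := by ring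
    rw [this]
    have : (1 + (m:ℝ)) * (x+m) = ((m:ℝ)+1) * (x+m) := by ring
    rw [this]
    exact mul_le_mul_of_nonneg_left hle (by positivity)
  calc 1 / ((1 + (m:ℝ)) * (x + m)) ≤ 1 / (min x 1 * ((m:ℝ)+1)^2) :=
        one_div_le_one_div_of_le (by positivity) key
    _ = 1 / min x 1 * (1 / ((m:ℝ)+1)^2) := by rw [div_mul_div_comm, one_mul]

lemma hasDerivAt_term (m : ℕ) {y : ℝ} (hy : 0 < y) :
    HasDerivAt (fun y : ℝ => 1 / (1 + (m : ℝ)) - 1 / (y + m)) (1 / (y + m) ^ 2) y := by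
  have h0 : y + (m : ℝ) ≠ 0 := by positivity
  have h := (((hasDerivAt_id y).add_const (m : ℝ)).inv h0).const_sub (1 / (1 + (m : ℝ)))
  simp only [one_div] at h ⊢
  refine h.congr_deriv ?_
  rw [neg_div, neg_neg]
  simp

lemma hasDerivAt_pow_term (k : ℕ) (m : ℕ) {y : ℝ} (hy : 0 < y) :
    HasDerivAt (fun y : ℝ => 1 / (y + m) ^ k) (-(k : ℝ) * (1 / (y + m) ^ (k + 1))) y := by
  have h0 : y + (m : ℝ) ≠ 0 := by positivity
  have h := (hasDerivAt_zpow (-(k : ℤ)) (y + m) (Or.inl h0)).comp y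
    ((hasDerivAt_id y).add_const (m : ℝ))
  have hfun : (fun z : ℝ => (z + (m : ℝ)) ^ (-(k : ℤ))) = fun z : ℝ => 1 / (z + m) ^ k := by
    funext z
    rw [zpow_neg, zpow_natCast, one_div]
  simp only [Function.comp_def, id_eq] at h
  rw [hfun] at h
  refine h.congr_deriv ?_
  have : (-(k : ℤ) - 1) = -((k + 1 : ℕ) : ℤ) := by push_cast; ring
  rw [this, zpow_neg, zpow_natCast]
  push_cast
  field_simp

lemma hasDerivAt_psi {x : ℝ} (hx : 0 < x) : HasDerivAt psiR (PG 2 x) x := by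
  have ha : (0 : ℝ) < x / 2 := by linarith
  have key : HasDerivAt (fun z : ℝ => ∑' m : ℕ, (1 / (1 + (m : ℝ)) - 1 / (z + m)))
      (∑' m : ℕ, 1 / (x + (m : ℝ)) ^ 2) x := by
    apply hasDerivAt_tsum_of_isPreconnected
      (u := fun m : ℕ => (1 / min (x/2) 1) ^ 2 * (1 / ((m : ℝ) + 1) ^ 2))
      ((summable_basic le_rfl).mul_left _) isOpen_Ioi isPreconnected_Ioi
      (fun m y hy => hasDerivAt_term m (ha.trans hy))
      (fun m y hy => ?_) (mem_Ioi.mpr (by linarith : x/2 < x)) (summable_psi hx)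
      (mem_Ioi.mpr (by linarith : x/2 < x))
    rw [Real.norm_eq_abs, abs_of_nonneg (by positivity)]
    exact pow_bound ha (le_of_lt hy) m 2
  exact key.const_add (-Real.eulerMascheroniConstant)

lemma hasDerivAt_PG {k : ℕ} (hk : 2 ≤ k) {x : ℝ} (hx : 0 < x) :
    HasDerivAt (PG k) (-(k : ℝ) * PG (k + 1) x) x := by
  have ha : (0 : ℝ) < x / 2 := by linarith
  have key : HasDerivAt (fun z : ℝ => ∑' m : ℕ, 1 / (z + (m : ℝ)) ^ k)
      (∑' m : ℕ, -(k : ℝ) * (1 / (x + (m : ℝ)) ^ (k + 1))) x := by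
    apply hasDerivAt_tsum_of_isPreconnected
      (u := fun m : ℕ => (k : ℝ) * ((1 / min (x/2) 1) ^ (k+1) * (1 / ((m : ℝ) + 1) ^ (k+1))))
      (((summable_basic (by omega)).mul_left _).mul_left _) isOpen_Ioi isPreconnected_Ioi
      (fun m y hy => hasDerivAt_pow_term k m (ha.trans hy))
      (fun m y hy => ?_) (mem_Ioi.mpr (by linarith : x/2 < x)) (summable_pow hx hk)
      (mem_Ioi.mpr (by linarith : x/2 < x))
    have hy0 : (0:ℝ) < y := ha.trans hy
    rw [norm_mul, Real.norm_eq_abs, Real.norm_eq_abs, abs_neg, Nat.abs_cast,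
      abs_of_nonneg (by positivity)]
    exact mul_le_mul_of_nonneg_left (pow_bound ha (le_of_lt hy) m (k+1)) (Nat.cast_nonneg k)
  rw [tsum_mul_left] at key
  exact key

lemma tendsto_logc : Tendsto (fun N : ℕ => Real.log ((N:ℝ)+1) - Real.log N) atTop (𝓝 0) := by
  have h1 : Tendsto (fun N : ℕ => 1 + 1/(N:ℝ)) atTop (𝓝 1) := by
    have := tendsto_one_div_atTop_nhds_zero_nat (𝕜 := ℝ)
    simpa using tendsto_const_nhds.add this
  have h2 : Tendsto (fun N : ℕ => Real.log (1 + 1/(N:ℝ))) atTop (𝓝 0) := by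
    have := (Real.continuousAt_log (by norm_num : (1:ℝ) ≠ 0)).tendsto.comp h1
    simpa [Function.comp_def] using this
  refine h2.congr' ?_
  filter_upwards [eventually_gt_atTop 0] with N hN
  have hN0 : (0:ℝ) < N := by exact_mod_cast hN
  rw [show 1 + 1/(N:ℝ) = ((N:ℝ)+1)/N by field_simp, Real.log_div (by positivity) hN0.ne']

lemma tendsto_c :
    Tendsto (fun N : ℕ => Real.log N - ∑ m ∈ Finset.range (N+1), 1 / (1 + (m:ℝ)))
      atTop (𝓝 (-Real.eulerMascheroniConstant)) := by
  have hharm : ∀ N : ℕ, ∑ m ∈ Finset.range (N+1), 1 / (1 + (m:ℝ)) = ((harmonic (N+1) : ℚ) : ℝ) := by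
    intro N
    rw [harmonic]
    push_cast
    refine Finset.sum_congr rfl fun m _ => ?_
    rw [one_div]
    ring_nf
  have h1 : Tendsto (fun N : ℕ => ((harmonic (N+1) : ℚ) : ℝ) - Real.log ((N:ℝ)+1)) atTop
      (𝓝 Real.eulerMascheroniConstant) := by
    have := Real.tendsto_harmonic_sub_log.comp (tendsto_add_atTop_nat 1)
    refine this.congr fun N => ?_
    simp only [Function.comp_apply]
    push_cast
    ring_nf
  have h2 := (h1.add tendsto_logc).neg
  simp only [add_zero] at h2
  refine h2.congr fun N => ?_
  rw [hharm N]
  ring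

lemma hasDerivAt_logGamma {x : ℝ} (hx : 0 < x) :
    HasDerivAt (fun y : ℝ => Real.log (Real.Gamma y)) (psiR x) x := by
  have ha : (0:ℝ) < x/2 := by linarith
  set s : Set ℝ := Ioo (x/2) (x+1) with hs
  have hxs : x ∈ s := ⟨by linarith, by linarith⟩
  -- uniform convergence of the series part
  have hS : TendstoUniformlyOn
      (fun N : ℕ => fun y : ℝ => ∑ m ∈ Finset.range N, (1 / (1 + (m:ℝ)) - 1 / (y + m)))
      (fun y : ℝ => ∑' m : ℕ, (1 / (1 + (m:ℝ)) - 1 / (y + m))) atTop s := by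
    apply tendstoUniformlyOn_tsum_nat
      (u := fun m : ℕ => ((x+2) * (1 / min (x/2) 1)) * (1 / ((m:ℝ)+1)^2))
      ((summable_basic le_rfl).mul_left _)
    intro m y hy
    obtain ⟨hy1, hy2⟩ := hy
    have hy0 : (0:ℝ) < y := ha.trans hy1
    have h1 : (0:ℝ) < 1 + m := by positivity
    have h2 : (0:ℝ) < y + m := by positivity
    have he : 1 / (1 + (m:ℝ)) - 1 / (y + m) = (y - 1) * (1 / ((1 + (m:ℝ)) * (y + m))) := by
      field_simp
      ring
    rw [he, norm_mul, Real.norm_eq_abs, Real.norm_eq_abs,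
      abs_of_nonneg (by positivity : (0:ℝ) ≤ 1 / ((1 + (m:ℝ)) * (y + m)))]
    have hb1 : |y - 1| ≤ x + 2 := by
      rw [abs_le]; constructor <;> nlinarith
    have hb2 : 1 / ((1 + (m:ℝ)) * (y + m)) ≤ (1 / min (x/2) 1) * (1 / ((m:ℝ)+1)^2) := by
      have hle : min (x/2) 1 * ((m:ℝ) + 1) ≤ y + m := min_mul_le ha hy1.le m
      have hmin := min_pos ha
      have key : min (x/2) 1 * ((m:ℝ)+1)^2 ≤ (1 + (m:ℝ)) * (y + m) := by nlinarith
      calc 1 / ((1 + (m:ℝ)) * (y + m)) ≤ 1 / (min (x/2) 1 * ((m:ℝ)+1)^2) :=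
            one_div_le_one_div_of_le (by positivity) key
        _ = 1 / min (x/2) 1 * (1 / ((m:ℝ)+1)^2) := by rw [div_mul_div_comm, one_mul]
    rw [mul_assoc]
    exact mul_le_mul hb1 hb2 (by positivity) (by positivity)
  -- uniform convergence of derivative sequence
  have hF' : TendstoUniformlyOn
      (fun N : ℕ => fun y : ℝ => Real.log N - ∑ m ∈ Finset.range (N+1), 1 / (y + (m:ℝ)))
      psiR atTop s := by
    have hsum := fun N : ℕ => tendsto_add_atTop_nat 1
    have hS' : TendstoUniformlyOn
        (fun N : ℕ => fun y : ℝ => ∑ m ∈ Finset.range (N+1), (1 / (1 + (m:ℝ)) - 1 / (y + m)))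
        (fun y : ℝ => ∑' m : ℕ, (1 / (1 + (m:ℝ)) - 1 / (y + m))) atTop s := by
      intro v hv
      exact (tendsto_add_atTop_nat 1).eventually (hS v hv)
    have hC : TendstoUniformlyOn
        (fun N : ℕ => fun _ : ℝ => Real.log N - ∑ m ∈ Finset.range (N+1), 1 / (1 + (m:ℝ)))
        (fun _ : ℝ => -Real.eulerMascheroniConstant) atTop s :=
      tendsto_c.tendstoUniformlyOn_const s
    have htu := hC.add hS'
    refine (htu.congr ?_).congr_right ?_
    · filter_upwards with N
      intro y hy
      simp only [Pi.add_apply]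
      rw [Finset.sum_sub_distrib]
      ring
    · intro y hy
      simp only [Pi.add_apply, psiR]
  -- pointwise convergence of the sequence itself
  have hFconv : ∀ y ∈ s, Tendsto (fun N : ℕ => Real.BohrMollerup.logGammaSeq y N) atTop
      (𝓝 (Real.log (Real.Gamma y))) := fun y hy =>
    Real.BohrMollerup.tendsto_log_gamma (ha.trans hy.1)
  -- derivatives of the sequence
  have hFder : ∀ N : ℕ, ∀ y ∈ s,
      HasDerivAt (fun y : ℝ => Real.BohrMollerup.logGammaSeq y N)
        (Real.log N - ∑ m ∈ Finset.range (N+1), 1 / (y + (m:ℝ))) y := by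
    intro N y hy
    have hy0 : (0:ℝ) < y := ha.trans hy.1
    simp only [Real.BohrMollerup.logGammaSeq]
    apply HasDerivAt.sub
    · exact (hasDerivAt_mul_const (Real.log N)).add_const _
    · apply HasDerivAt.fun_sum
      intro m _
      have h0 : y + (m:ℝ) ≠ 0 := by positivity
      exact ((hasDerivAt_id y).add_const (m:ℝ)).log h0 |>.congr_deriv (by simp)
  exact hasDerivAt_of_tendstoUniformlyOn isOpen_Ioo hF'
    (Eventually.of_forall hFder) hFconv hxs

lemma ev_deriv_logGamma {x : ℝ} (hx : 0 < x) :
    deriv (fun y : ℝ => Real.log (Real.Gamma y)) =ᶠ[𝓝 x] psiR := by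
  filter_upwards [eventually_gt_nhds hx] with y hy
  exact (hasDerivAt_logGamma hy).deriv

lemma main_iter (j : ℕ) : ∀ {x : ℝ}, 0 < x →
    iteratedDeriv (j+2) (fun y : ℝ => Real.log (Real.Gamma y)) x =
      (-1)^j * (Nat.factorial (j+1) : ℝ) * PG (j+2) x := by
  induction j with
  | zero =>
    intro x hx
    rw [iteratedDeriv_succ, iteratedDeriv_one, (ev_deriv_logGamma hx).deriv_eq,
      (hasDerivAt_psi hx).deriv]
    norm_num
  | succ j ih =>
    intro x hx
    rw [show j + 1 + 2 = (j + 2) + 1 by ring, iteratedDeriv_succ]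
    have h1 : iteratedDeriv (j+2) (fun y : ℝ => Real.log (Real.Gamma y)) =ᶠ[𝓝 x]
        (fun y => (-1)^j * (Nat.factorial (j+1) : ℝ) * PG (j+2) y) := by
      filter_upwards [eventually_gt_nhds hx] with y hy
      exact ih hy
    rw [h1.deriv_eq, (((hasDerivAt_PG (by omega) hx)).const_mul
      ((-1)^j * (Nat.factorial (j+1) : ℝ))).deriv]
    rw [show j + 2 + 1 = j + 1 + 2 by ring]
    push_cast [Nat.factorial_succ, pow_succ]
    ring

lemma series_split {n : ℕ} (hn : 2 ≤ n) :
    (∑' m : ℕ, 1 / (4*(m:ℝ)+1)^n) + (∑' m : ℕ, 1 / (4*(m:ℝ)+3)^n) =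
      (1 - 1/2^n) * ∑' k : ℕ, (1:ℝ) / ((k:ℝ)+1)^n := by
  have hZ : Summable (fun k : ℕ => (1:ℝ) / ((k:ℝ)+1)^n) := summable_basic hn
  have hO : Summable (fun k : ℕ => (1:ℝ) / (2*(k:ℝ)+1)^n) := by
    refine ((summable_pow (by norm_num : (0:ℝ) < 1/2) hn).mul_left ((1:ℝ)/2^n)).congr fun k => ?_
    rw [show 2*(k:ℝ)+1 = 2*((1/2 : ℝ) + k) by ring, mul_pow]
    field_simp
  have hA : Summable (fun k : ℕ => (1:ℝ) / (4*(k:ℝ)+1)^n) := by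
    refine ((summable_pow (by norm_num : (0:ℝ) < 1/4) hn).mul_left ((1:ℝ)/4^n)).congr fun k => ?_
    rw [show 4*(k:ℝ)+1 = 4*((1/4 : ℝ) + k) by ring, mul_pow]
    field_simp
  have hB : Summable (fun k : ℕ => (1:ℝ) / (4*(k:ℝ)+3)^n) := by
    refine ((summable_pow (by norm_num : (0:ℝ) < 3/4) hn).mul_left ((1:ℝ)/4^n)).congr fun k => ?_
    rw [show 4*(k:ℝ)+3 = 4*((3/4 : ℝ) + k) by ring, mul_pow]
    field_simp
  -- Step 1 : odd sum = (1 - 1/2^n) Z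
  have he1 : Summable (fun k : ℕ => (1:ℝ) / (((2*k : ℕ):ℝ)+1)^n) := by
    refine hO.congr fun k => ?_; push_cast; ring_nf
  have ho1 : Summable (fun k : ℕ => (1:ℝ) / (((2*k+1 : ℕ):ℝ)+1)^n) := by
    refine (hZ.mul_left ((1:ℝ)/2^n)).congr fun k => ?_
    push_cast
    rw [show ((2:ℝ)*k+1)+1 = 2*((k:ℝ)+1) by ring, mul_pow]
    field_simp
  have step1 := tsum_even_add_odd (f := fun k : ℕ => (1:ℝ) / ((k:ℝ)+1)^n) he1 ho1
  have e1 : (∑' k : ℕ, (1:ℝ) / (((2*k : ℕ):ℝ)+1)^n) = ∑' k : ℕ, (1:ℝ) / (2*(k:ℝ)+1)^n :=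
    tsum_congr fun k => by push_cast; ring_nf
  have e2 : (∑' k : ℕ, (1:ℝ) / (((2*k+1 : ℕ):ℝ)+1)^n) =
      (1/2^n) * ∑' k : ℕ, (1:ℝ) / ((k:ℝ)+1)^n := by
    rw [← tsum_mul_left]
    refine tsum_congr fun k => ?_
    push_cast
    rw [show ((2:ℝ)*k+1)+1 = 2*((k:ℝ)+1) by ring, mul_pow]
    field_simp
  rw [e1, e2] at step1
  -- Step 2 : split odd sum into 4k+1 and 4k+3
  have he2 : Summable (fun k : ℕ => (1:ℝ) / (2*((2*k : ℕ):ℝ)+1)^n) := by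
    refine hA.congr fun k => ?_; push_cast; ring_nf
  have ho2 : Summable (fun k : ℕ => (1:ℝ) / (2*((2*k+1 : ℕ):ℝ)+1)^n) := by
    refine hB.congr fun k => ?_; push_cast; ring_nf
  have step2 := tsum_even_add_odd (f := fun k : ℕ => (1:ℝ) / (2*(k:ℝ)+1)^n) he2 ho2
  have e3 : (∑' k : ℕ, (1:ℝ) / (2*((2*k : ℕ):ℝ)+1)^n) = ∑' k : ℕ, (1:ℝ) / (4*(k:ℝ)+1)^n :=
    tsum_congr fun k => by push_cast; ring_nf
  have e4 : (∑' k : ℕ, (1:ℝ) / (2*((2*k+1 : ℕ):ℝ)+1)^n) = ∑' k : ℕ, (1:ℝ) / (4*(k:ℝ)+3)^n :=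
    tsum_congr fun k => by push_cast; ring_nf
  rw [e3, e4] at step2
  have step1' : (∑' k : ℕ, (1:ℝ) / (2*(k:ℝ)+1)^n) + (1/2^n) * (∑' k : ℕ, (1:ℝ) / ((k:ℝ)+1)^n)
      = ∑' k : ℕ, (1:ℝ) / ((k:ℝ)+1)^n := step1
  have step2' : (∑' m : ℕ, (1:ℝ) / (4*(m:ℝ)+1)^n) + (∑' m : ℕ, (1:ℝ) / (4*(m:ℝ)+3)^n)
      = ∑' k : ℕ, (1:ℝ) / (2*(k:ℝ)+1)^n := step2
  rw [step2']
  linarith [step1']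

theorem polygamma_quarter_sum_zeta (n : ℕ) (hn : 2 ≤ n) :
    iteratedDeriv n (fun x : ℝ => Real.log (Real.Gamma x)) (1/4) +
      iteratedDeriv n (fun x : ℝ => Real.log (Real.Gamma x)) (3/4) =
      (-1)^n * (2^n : ℝ) * ((2^n : ℝ) - 1) * (Nat.factorial (n-1) : ℝ) *
        ∑' k : ℕ, (1 : ℝ) / (k+1)^n := by
  obtain ⟨j, rfl⟩ : ∃ j, n = j + 2 := ⟨n - 2, by omega⟩
  rw [main_iter j (by norm_num : (0:ℝ) < 1/4), main_iter j (by norm_num : (0:ℝ) < 3/4)]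
  have hq1 : PG (j+2) (1/4) = 4^(j+2) * ∑' m : ℕ, 1 / (4*(m:ℝ)+1)^(j+2) := by
    rw [PG, ← tsum_mul_left]
    refine tsum_congr fun m => ?_
    rw [show (1/4 : ℝ) + m = (4*(m:ℝ)+1)/4 by ring, div_pow, one_div_div]
    rw [div_eq_mul_one_div]
  have hq3 : PG (j+2) (3/4) = 4^(j+2) * ∑' m : ℕ, 1 / (4*(m:ℝ)+3)^(j+2) := by
    rw [PG, ← tsum_mul_left]
    refine tsum_congr fun m => ?_
    rw [show (3/4 : ℝ) + m = (4*(m:ℝ)+3)/4 by ring, div_pow, one_div_div]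
    rw [div_eq_mul_one_div]
  rw [hq1, hq3]
  have hsplit := series_split (n := j+2) (by omega)
  have hfact : (j + 2 - 1) = j + 1 := by omega
  rw [hfact]
  have h2 : ((-1:ℝ))^(j+2) = (-1)^j := by rw [pow_add]; norm_num
  rw [h2]
  have key : (4:ℝ)^(j+2) * (∑' m : ℕ, 1 / (4*(m:ℝ)+1)^(j+2))
      + (4:ℝ)^(j+2) * (∑' m : ℕ, 1 / (4*(m:ℝ)+3)^(j+2))
      = (2^(j+2) : ℝ) * ((2^(j+2) : ℝ) - 1) * ∑' k : ℕ, (1:ℝ) / ((k:ℝ)+1)^(j+2) := by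
    rw [← mul_add, hsplit]
    have h4 : (4:ℝ)^(j+2) = 2^(j+2) * 2^(j+2) := by
      rw [show (4:ℝ) = 2 * 2 by norm_num, mul_pow]
    rw [h4]
    have h2pos : (0:ℝ) < 2^(j+2) := by positivity
    field_simp
  calc (-1:ℝ)^j * (Nat.factorial (j+1) : ℝ) * (4^(j+2) * ∑' m : ℕ, 1 / (4*(m:ℝ)+1)^(j+2))
        + (-1:ℝ)^j * (Nat.factorial (j+1) : ℝ) * (4^(j+2) * ∑' m : ℕ, 1 / (4*(m:ℝ)+3)^(j+2))
      = (-1:ℝ)^j * (Nat.factorial (j+1) : ℝ) *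
          ((4:ℝ)^(j+2) * (∑' m : ℕ, 1 / (4*(m:ℝ)+1)^(j+2))
            + (4:ℝ)^(j+2) * (∑' m : ℕ, 1 / (4*(m:ℝ)+3)^(j+2))) := by ring
    _ = (-1:ℝ)^j * (2^(j+2) : ℝ) * ((2^(j+2) : ℝ) - 1) * (Nat.factorial (j+1) : ℝ) *
          ∑' k : ℕ, (1:ℝ) / ((k:ℝ)+1)^(j+2) := by rw [key]; ring
end

section
/- For every natural number n ≥ 1, ψ^{(2n)}(1/4) - ψ^{(2n)}(3/4) = -(2n)! · 4^{2n+1} · β(2n+1), where β(2n+1) is the Dirichlet beta value ∑' j : ℕ, (-1)^j / (2j+1)^{2n+1}; formally, iteratedDeriv (2n+1) (fun x : ℝ => Real.log (Real.Gamma x)) (1/4) - iteratedDeriv (2n+1) (fun x : ℝ => Real.log (Real.Gamma x)) (3/4) = -((2*n)! : ℝ) * 4^(2*n+1) * ∑' j : ℕ, (-1)^j / (2*j+1)^(2*n+1). -/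
open Real Filter Finset Set Topology

namespace PolygammaAux


noncomputable def g1 (x : ℝ) : ℝ :=
  -Real.eulerMascheroniConstant + ∑' m : ℕ, ((1 + (m:ℝ))⁻¹ - (x + m)⁻¹)

noncomputable def S (k : ℕ) (x : ℝ) : ℝ := ∑' m : ℕ, ((x + (m:ℝ)) ^ k)⁻¹

noncomputable def L (k : ℕ) (x : ℝ) : ℝ := (-1) ^ k * (Nat.factorial (k-1) : ℝ) * S k x

noncomputable def F1 (N : ℕ) (x : ℝ) : ℝ :=
  Real.log N - ∑ m ∈ range (N+1), (x + (m:ℝ))⁻¹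

noncomputable def Lf (k N : ℕ) (x : ℝ) : ℝ :=
  (-1) ^ k * (Nat.factorial (k-1) : ℝ) * ∑ m ∈ range (N+1), ((x + (m:ℝ)) ^ k)⁻¹

lemma summable_sq : Summable (fun m : ℕ => (((1:ℝ) + m) ^ 2)⁻¹) := by
  have h := Real.summable_one_div_nat_pow.mpr (le_refl 2)
  have h2 := (summable_nat_add_iff 1).mpr h
  refine h2.congr fun m => ?_
  push_cast
  rw [one_div, add_comm]

lemma summable_aux {a : ℝ} (ha : 0 < a) {k : ℕ} (hk : 2 ≤ k) :
    Summable (fun m : ℕ => ((a + (m:ℝ)) ^ k)⁻¹) := by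
  set c := min a 1 with hc
  have hc0 : 0 < c := lt_min ha one_pos
  refine Summable.of_nonneg_of_le (fun m => by positivity)
    (fun m => ?_) ((summable_sq.mul_left (c ^ k)⁻¹))
  have hm : (0:ℝ) ≤ m := Nat.cast_nonneg m
  have h1 : c * (1 + (m:ℝ)) ≤ a + m := by
    have h := min_le_left a 1
    have h' := min_le_right a 1
    nlinarith
  have hp : (0:ℝ) < 1 + m := by positivity
  have h2 : (c * (1 + (m:ℝ))) ^ k ≤ (a + m) ^ k :=
    pow_le_pow_left₀ (by positivity) h1 k
  have h4 : (1 + (m:ℝ)) ^ 2 ≤ (1 + (m:ℝ)) ^ k := pow_le_pow_right₀ (by linarith) hk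
  rw [mul_pow] at h2
  have h5 : c ^ k * (1 + (m:ℝ)) ^ 2 ≤ (a + m) ^ k := le_trans (by nlinarith [pow_pos hc0 k]) h2
  rw [← mul_inv]
  exact inv_anti₀ (by positivity) h5


lemma tuo_succ {f : ℕ → ℝ → ℝ} {g : ℝ → ℝ} {s : Set ℝ}
    (h : TendstoUniformlyOn f g atTop s) :
    TendstoUniformlyOn (fun N => f (N+1)) g atTop s :=
  fun u hu => (tendsto_add_atTop_nat 1).eventually (h u hu)

lemma tuo_const_mul {f : ℕ → ℝ → ℝ} {g : ℝ → ℝ} {s : Set ℝ} (c : ℝ)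
    (h : TendstoUniformlyOn f g atTop s) :
    TendstoUniformlyOn (fun N x => c * f N x) (fun x => c * g x) atTop s := by
  have hu : UniformContinuous (fun y : ℝ => c * y) := by
    simpa [smul_eq_mul] using uniformContinuous_const_smul (M := ℝ) (X := ℝ) c
  exact hu.comp_tendstoUniformlyOn h

lemma tlu_Lf {k : ℕ} (hk : 2 ≤ k) :
    TendstoLocallyUniformlyOn (Lf k) (L k) atTop (Ioi 0) := by
  rw [tendstoLocallyUniformlyOn_iff_forall_isCompact isOpen_Ioi]
  intro K hK hKc
  rcases K.eq_empty_or_nonempty with rfl | hne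
  · exact fun u hu => Eventually.of_forall (by simp)
  have haK : sInf K ∈ K := hKc.sInf_mem hne
  have ha0 : 0 < sInf K := hK haK
  have base : TendstoUniformlyOn
      (fun N x => ∑ m ∈ range N, ((x + (m:ℝ)) ^ k)⁻¹) (S k) atTop K := by
    refine tendstoUniformlyOn_tsum_nat (summable_aux ha0 hk) (fun m x hx => ?_)
    have hax : sInf K ≤ x := csInf_le hKc.bddBelow hx
    have hx0 : (0:ℝ) < x := hK hx
    have hm : (0:ℝ) ≤ m := Nat.cast_nonneg m
    rw [Real.norm_eq_abs, abs_of_nonneg (by positivity)]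
    exact inv_anti₀ (by positivity) (pow_le_pow_left₀ (by positivity) (by linarith) k)
  exact (tuo_const_mul _ (tuo_succ base)).congr (Eventually.of_forall (fun N x hx => rfl))


lemma tendsto_const_part :
    Tendsto (fun N : ℕ => Real.log N - ∑ m ∈ range (N+1), (1 + (m:ℝ))⁻¹) atTop
      (𝓝 (-Real.eulerMascheroniConstant)) := by
  have hharm : ∀ N : ℕ, ∑ m ∈ range (N+1), (1 + (m:ℝ))⁻¹ = ((harmonic (N+1) : ℚ) : ℝ) := by
    intro N
    rw [harmonic]
    push_cast
    exact Finset.sum_congr rfl fun m _ => by rw [add_comm]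
  have h1 : Tendsto (fun N : ℕ => ((harmonic (N+1) : ℚ) : ℝ) - Real.log ((N:ℝ)+1)) atTop
      (𝓝 Real.eulerMascheroniConstant) := by
    have := Real.tendsto_harmonic_sub_log.comp (tendsto_add_atTop_nat 1)
    refine this.congr fun N => ?_
    simp [Function.comp]
  have h2 : Tendsto (fun N : ℕ => Real.log ((N:ℝ)+1) - Real.log N) atTop (𝓝 0) := by
    have hbase : Tendsto (fun N : ℕ => Real.log (1 + ((N:ℝ))⁻¹)) atTop (𝓝 0) := by
      have ht : Tendsto (fun N : ℕ => 1 + ((N:ℝ))⁻¹) atTop (𝓝 1) := by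
        simpa using (tendsto_const_nhds (x := (1:ℝ)) (f := atTop)).add
          (tendsto_natCast_atTop_atTop (R := ℝ)).inv_tendsto_atTop
      simpa using ht.log one_ne_zero
    apply hbase.congr'
    filter_upwards [eventually_gt_atTop 0] with N hN
    have hN0 : (0:ℝ) < N := by exact_mod_cast hN
    rw [← Real.log_div (by positivity) (by positivity)]
    congr 1
    field_simp
  have h3 := h1.neg.sub h2
  refine Tendsto.congr (f₁ := fun N : ℕ =>
    -(((harmonic (N+1) : ℚ) : ℝ) - Real.log ((N:ℝ)+1)) - (Real.log ((N:ℝ)+1) - Real.log N))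
    (fun N => by rw [hharm]; ring) ?_
  simpa using h3

lemma tlu_F1 : TendstoLocallyUniformlyOn F1 g1 atTop (Ioi 0) := by
  rw [tendstoLocallyUniformlyOn_iff_forall_isCompact isOpen_Ioi]
  intro K hK hKc
  rcases K.eq_empty_or_nonempty with rfl | hne
  · exact fun u hu => Eventually.of_forall (by simp)
  have haK : sInf K ∈ K := hKc.sInf_mem hne
  have hbK : sSup K ∈ K := hKc.sSup_mem hne
  have ha0 : 0 < sInf K := hK haK
  set a := sInf K
  set b := sSup K
  set c := min a 1 with hc
  have hc0 : 0 < c := lt_min ha0 one_pos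
  -- series part
  have hser : TendstoUniformlyOn
      (fun (N : ℕ) (x : ℝ) => ∑ m ∈ range N, ((1 + (m:ℝ))⁻¹ - (x + m)⁻¹))
      (fun x : ℝ => ∑' m : ℕ, ((1 + (m:ℝ))⁻¹ - (x + m)⁻¹)) atTop K := by
    refine tendstoUniformlyOn_tsum_nat (f := fun (m : ℕ) (x : ℝ) => (1 + (m:ℝ))⁻¹ - (x + m)⁻¹) ((summable_sq.mul_left ((b+1)/c))) (fun m x hx => ?_)
    have hax : a ≤ x := csInf_le hKc.bddBelow hx
    have hxb : x ≤ b := le_csSup hKc.bddAbove hx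
    have hx0 : (0:ℝ) < x := hK hx
    have hm : (0:ℝ) ≤ m := Nat.cast_nonneg m
    have hp1 : (0:ℝ) < 1 + m := by positivity
    have hp2 : (0:ℝ) < x + m := by positivity
    have heq : (1 + (m:ℝ))⁻¹ - (x + m)⁻¹ = (x - 1) * ((1+(m:ℝ)) * (x+m))⁻¹ := by
      field_simp
      ring
    show ‖(1 + (m:ℝ))⁻¹ - (x + (m:ℝ))⁻¹‖ ≤ (b + 1) / c * ((1 + (m:ℝ)) ^ 2)⁻¹
    rw [Real.norm_eq_abs, heq, abs_mul, abs_of_nonneg (by positivity : (0:ℝ) ≤ ((1+(m:ℝ))*(x+m))⁻¹)]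
    have hcx : c * (1 + (m:ℝ)) ≤ x + m := by
      have h := min_le_left a 1
      have h' := min_le_right a 1
      nlinarith
    have hb1 : |x - 1| ≤ b + 1 := by
      rw [abs_le]; constructor <;> nlinarith
    calc |x - 1| * ((1+(m:ℝ)) * (x+m))⁻¹
        ≤ (b+1) * ((1+(m:ℝ)) * (c * (1+(m:ℝ))))⁻¹ := by
          apply mul_le_mul hb1 (inv_anti₀ (by positivity) (by nlinarith)) (by positivity)
            (by nlinarith)
      _ = (b+1)/c * ((1 + (m:ℝ))^2)⁻¹ := by
          rw [show (1+(m:ℝ))*(c*(1+(m:ℝ))) = c*((1+(m:ℝ))^2) by ring, mul_inv, div_eq_mul_inv]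
          ring
  -- constant part
  have hconst : TendstoUniformlyOn
      (fun N : ℕ => fun _ : ℝ => Real.log N - ∑ m ∈ range (N+1), (1 + (m:ℝ))⁻¹)
      (fun _ => -Real.eulerMascheroniConstant) atTop K :=
    tendsto_const_part.tendstoUniformlyOn_const K
  have hall := hconst.add (tuo_succ hser)
  have hF : TendstoUniformlyOn F1
      ((fun _ : ℝ => -Real.eulerMascheroniConstant) +
        fun x : ℝ => ∑' m : ℕ, ((1 + (m:ℝ))⁻¹ - (x + m)⁻¹)) atTop K := by
    refine hall.congr (Eventually.of_forall fun N x hx => ?_)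
    simp only [Pi.add_apply, F1]
    rw [Finset.sum_sub_distrib]
    ring
  exact hF.congr_right (fun x hx => by simp [g1])


lemma hasDerivAt_logGammaSeq (N : ℕ) {x : ℝ} (hx : 0 < x) :
    HasDerivAt (fun y => Real.BohrMollerup.logGammaSeq y N) (F1 N x) x := by
  have hsum : HasDerivAt (fun y : ℝ => ∑ m ∈ range (N+1), Real.log (y + m))
      (∑ m ∈ range (N+1), (x + (m:ℝ))⁻¹) x := by
    apply HasDerivAt.fun_sum
    intro m _
    have hp : (0:ℝ) < x + m := by positivity
    have h1 : HasDerivAt (fun y : ℝ => y + (m:ℝ)) 1 x := (hasDerivAt_id x).add_const _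
    have h2 := (Real.hasDerivAt_log hp.ne').comp x h1
    simpa [Function.comp_def] using h2
  have h2 : HasDerivAt (fun y : ℝ => y * Real.log N + Real.log (Nat.factorial N))
      (Real.log N) x := by
    simpa using ((hasDerivAt_id x).mul_const (Real.log N)).add_const (Real.log (Nat.factorial N))
  have h3 := h2.fun_sub hsum
  unfold Real.BohrMollerup.logGammaSeq F1
  convert! h3 using 1

lemma hasDerivAt_F1 (N : ℕ) {x : ℝ} (hx : 0 < x) :
    HasDerivAt (F1 N) (Lf 2 N x) x := by
  have hsum : HasDerivAt (fun y : ℝ => ∑ m ∈ range (N+1), (y + (m:ℝ))⁻¹)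
      (∑ m ∈ range (N+1), -(((x + (m:ℝ)) ^ 2)⁻¹)) x := by
    apply HasDerivAt.fun_sum
    intro m _
    have hp : (0:ℝ) < x + m := by positivity
    have h1 : HasDerivAt (fun y : ℝ => y + (m:ℝ)) 1 x := (hasDerivAt_id x).add_const _
    have h2 := (hasDerivAt_inv hp.ne').comp x h1
    simpa [sq, Function.comp_def] using h2
  have h3 := (hasDerivAt_const x (Real.log N)).fun_sub hsum
  unfold F1 Lf
  convert! h3 using 1
  rw [Finset.sum_neg_distrib]
  norm_num

lemma hasDerivAt_Lf (k N : ℕ) (hk : 1 ≤ k) {x : ℝ} (hx : 0 < x) :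
    HasDerivAt (Lf k N) (Lf (k+1) N x) x := by
  have hsum : HasDerivAt (fun y : ℝ => ∑ m ∈ range (N+1), ((y + (m:ℝ)) ^ k)⁻¹)
      (∑ m ∈ range (N+1), -(k:ℝ) * ((x + (m:ℝ)) ^ (k+1))⁻¹) x := by
    apply HasDerivAt.fun_sum
    intro m _
    have hp : (0:ℝ) < x + m := by positivity
    have h1 : HasDerivAt (fun y : ℝ => y + (m:ℝ)) 1 x := (hasDerivAt_id x).add_const _
    have h2 := (hasDerivAt_zpow (-(k:ℤ)) (x + m) (Or.inl hp.ne')).comp x h1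
    have hz : ∀ y : ℝ, y ^ (-(k:ℤ)) = (y ^ k)⁻¹ := fun y => by
      rw [zpow_neg, zpow_natCast]
    have hz2 : (x + (m:ℝ)) ^ (-(k:ℤ) - 1) = ((x + (m:ℝ)) ^ (k+1))⁻¹ := by
      rw [show -(k:ℤ) - 1 = -((k:ℤ)+1) by ring, zpow_neg, ← zpow_natCast (x + (m:ℝ)) (k+1)]
      push_cast
      ring_nf
    simp only [hz, hz2, mul_one] at h2
    convert! h2 using 1
    push_cast
    ring
  have h3 := hsum.const_mul ((-1:ℝ) ^ k * (Nat.factorial (k-1) : ℝ))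
  unfold Lf
  convert! h3 using 1
  rw [← Finset.mul_sum]
  have hfac : ((k:ℝ)) * (Nat.factorial (k-1) : ℝ) = (Nat.factorial k : ℝ) := by
    rw [← Nat.cast_mul, Nat.mul_factorial_pred (by omega)]
  have hsimp : (k+1) - 1 = k := by omega
  rw [hsimp, pow_succ]
  linear_combination ((-1:ℝ)^k * (∑ m ∈ range (N+1), ((x + (m:ℝ))^(k+1))⁻¹)) * hfac


lemma hasDerivAt_logGamma {x : ℝ} (hx : 0 < x) :
    HasDerivAt (fun y : ℝ => Real.log (Real.Gamma y)) (g1 x) x :=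
  hasDerivAt_of_tendstoLocallyUniformlyOn isOpen_Ioi tlu_F1
    (Eventually.of_forall fun N y hy => hasDerivAt_logGammaSeq N hy)
    (fun y hy => Real.BohrMollerup.tendsto_log_gamma hy) hx

lemma hasDerivAt_g1 {x : ℝ} (hx : 0 < x) : HasDerivAt g1 (L 2 x) x :=
  hasDerivAt_of_tendstoLocallyUniformlyOn isOpen_Ioi (tlu_Lf le_rfl)
    (Eventually.of_forall fun N y hy => hasDerivAt_F1 N hy)
    (fun y hy => tlu_F1.tendsto_at hy) hx

lemma hasDerivAt_L (k : ℕ) (hk : 2 ≤ k) {x : ℝ} (hx : 0 < x) :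
    HasDerivAt (L k) (L (k+1) x) x :=
  hasDerivAt_of_tendstoLocallyUniformlyOn isOpen_Ioi (tlu_Lf (by omega))
    (Eventually.of_forall fun N y hy => hasDerivAt_Lf k N (by omega) hy)
    (fun y hy => (tlu_Lf hk).tendsto_at hy) hx

lemma iteratedDeriv_logGamma (k : ℕ) {x : ℝ} (hx : 0 < x) :
    iteratedDeriv (k+2) (fun y : ℝ => Real.log (Real.Gamma y)) x = L (k+2) x := by
  induction k generalizing x with
  | zero =>
    rw [iteratedDeriv_succ, iteratedDeriv_one]
    have h1 : deriv (fun y : ℝ => Real.log (Real.Gamma y)) =ᶠ[𝓝 x] g1 := by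
      filter_upwards [Ioi_mem_nhds hx] with y hy
      exact (hasDerivAt_logGamma hy).deriv
    rw [h1.deriv_eq]
    exact (hasDerivAt_g1 hx).deriv
  | succ k ih =>
    rw [iteratedDeriv_succ]
    have h1 : iteratedDeriv (k+2) (fun y : ℝ => Real.log (Real.Gamma y)) =ᶠ[𝓝 x] L (k+2) := by
      filter_upwards [Ioi_mem_nhds hx] with y hy
      exact ih hy
    rw [h1.deriv_eq]
    exact (hasDerivAt_L (k+2) (by omega) hx).deriv


lemma summable_lin {c d : ℝ} (hd : 1 ≤ d) (hc : 1 ≤ c) {k : ℕ} (hk : 2 ≤ k) :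
    Summable (fun m : ℕ => ((c*(m:ℝ)+d) ^ k)⁻¹) := by
  refine Summable.of_nonneg_of_le (fun m => by positivity) (fun m => ?_) summable_sq
  have hm : (0:ℝ) ≤ m := Nat.cast_nonneg m
  have h1 : (1:ℝ) + m ≤ c*m + d := by nlinarith
  have h2 : ((1:ℝ)+m)^2 ≤ ((1:ℝ)+m)^k := pow_le_pow_right₀ (by linarith) hk
  have h3 : ((1:ℝ)+m)^k ≤ (c*m+d)^k := pow_le_pow_left₀ (by positivity) h1 k
  exact inv_anti₀ (by positivity) (le_trans h2 h3)

lemma S_quarter {k : ℕ} (hk : 2 ≤ k) :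
    S k (1/4) - S k (3/4) = 4^k * ∑' j : ℕ, (-1:ℝ)^j / (2*(j:ℝ)+1)^k := by
  have hA : Summable (fun m : ℕ => ((4*(m:ℝ)+1) ^ k)⁻¹) := summable_lin le_rfl (by norm_num) hk
  have hB : Summable (fun m : ℕ => ((4*(m:ℝ)+3) ^ k)⁻¹) := summable_lin (by norm_num) (by norm_num) hk
  set f : ℕ → ℝ := fun j => (-1:ℝ)^j / (2*(j:ℝ)+1)^k with hf
  have hfe : ∀ m : ℕ, f (2*m) = ((4*(m:ℝ)+1) ^ k)⁻¹ := by
    intro m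
    rw [hf]
    show (-1:ℝ)^(2*m) / (2*((2*m:ℕ):ℝ)+1)^k = ((4*(m:ℝ)+1) ^ k)⁻¹
    rw [pow_mul, neg_one_sq, one_pow, one_div]
    push_cast
    rw [show 2*(2*(m:ℝ))+1 = 4*m+1 by ring]
  have hfo : ∀ m : ℕ, f (2*m+1) = -((4*(m:ℝ)+3) ^ k)⁻¹ := by
    intro m
    rw [hf]
    show (-1:ℝ)^(2*m+1) / (2*((2*m+1:ℕ):ℝ)+1)^k = -((4*(m:ℝ)+3) ^ k)⁻¹
    have hodd : (-1:ℝ)^(2*m+1) = -1 := Odd.neg_one_pow ⟨m, by ring⟩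
    rw [hodd]
    push_cast
    rw [show 2*(2*(m:ℝ)+1)+1 = 4*m+3 by ring, neg_div, one_div]
  have he : Summable (fun m : ℕ => f (2*m)) := hA.congr fun m => (hfe m).symm
  have ho : Summable (fun m : ℕ => f (2*m+1)) := hB.neg.congr fun m => (hfo m).symm
  have key := tsum_even_add_odd he ho
  rw [tsum_congr hfe, tsum_congr hfo, tsum_neg] at key
  have h1 : S k (1/4) = 4^k * ∑' m : ℕ, ((4*(m:ℝ)+1) ^ k)⁻¹ := by
    rw [S, ← tsum_mul_left]
    refine tsum_congr fun m => ?_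
    rw [show (1/4 + (m:ℝ)) = (4*m+1)/4 by ring, div_pow, inv_div]
    rw [div_eq_mul_inv]
  have h3 : S k (3/4) = 4^k * ∑' m : ℕ, ((4*(m:ℝ)+3) ^ k)⁻¹ := by
    rw [S, ← tsum_mul_left]
    refine tsum_congr fun m => ?_
    rw [show (3/4 + (m:ℝ)) = (4*m+3)/4 by ring, div_pow, inv_div]
    rw [div_eq_mul_inv]
  rw [h1, h3, ← key]
  ring


end PolygammaAux

theorem polygamma_quarter_diff_beta (n : ℕ) (hn : 1 ≤ n) :
    iteratedDeriv (2*n+1) (fun x : ℝ => Real.log (Real.Gamma x)) (1/4) -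
      iteratedDeriv (2*n+1) (fun x : ℝ => Real.log (Real.Gamma x)) (3/4) =
      -(Nat.factorial (2*n) : ℝ) * 4^(2*n+1) * ∑' j : ℕ, (-1 : ℝ)^j / (2*j+1)^(2*n+1) := by
  obtain ⟨m, rfl⟩ : ∃ m, n = m + 1 := ⟨n - 1, by omega⟩
  have hk : 2*(m+1)+1 = (2*m+1)+2 := by ring
  rw [hk]
  rw [PolygammaAux.iteratedDeriv_logGamma (2*m+1) (by norm_num),
      PolygammaAux.iteratedDeriv_logGamma (2*m+1) (by norm_num)]
  simp only [PolygammaAux.L]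
  rw [← mul_sub, PolygammaAux.S_quarter (by omega)]
  have h1 : (2*m+1)+2-1 = 2*(m+1) := by omega
  rw [h1]
  have h2 : (-1:ℝ)^((2*m+1)+2) = -1 := Odd.neg_one_pow ⟨m+1, by ring⟩
  rw [h2]
  ring
end
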